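/- For n ≥ 1, A_{n,λ}(-1) = 2^{n+1} (2^{n+1} β_{n+1,λ/2} - β_{n+1,λ})/(n+1), where β_{n,λ} are the degenerate Bernoulli numbers; also A_{0,λ}(-1) = 1. -/

import Mathlib

open Finset PowerSeries

/-- Degenerate falling factorial `(x)_{n,λ} = x(x-λ)⋯(x-(n-1)λ)`. -/
noncomputable def dfall (l x : ℝ) (n : ℕ) : ℝ := ∏ i ∈ Finset.range n, (x - i * l)

/-- Degenerate Eulerian number `A_λ(n,k) = ∑_{i=0}^k C(n+1,i)(-1)^i (k-i+1)_{n,λ}`. -/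
noncomputable def degEulerianNum (l : ℝ) (n k : ℕ) : ℝ :=
  ∑ i ∈ Finset.range (k+1), ((n+1).choose i : ℝ) * (-1)^i * dfall l ((k : ℝ) - i + 1) n

/-- Degenerate Eulerian polynomial `A_{n,λ}(x) = ∑_{k=0}^n A_λ(n,k) x^k`. -/
noncomputable def degEulerianPoly (l : ℝ) (n : ℕ) (x : ℝ) : ℝ :=
  ∑ k ∈ Finset.range (n+1), degEulerianNum l n k * x^k

/-- Generalized binomial coefficient `binom(y,m) = y(y-1)⋯(y-m+1)/m!`. -/
noncomputable def genBinom (y : ℝ) (m : ℕ) : ℝ :=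
  (∏ i ∈ Finset.range m, (y - i)) / m.factorial

/-- Degenerate exponential `e_λ^x(t) = ∑_k (x)_{k,λ} t^k/k!` as a formal power series. -/
noncomputable def degExp (l x : ℝ) : PowerSeries ℝ :=
  PowerSeries.mk fun k => dfall l x k / k.factorial

/-- Degenerate Stirling number of the second kind (explicit formula). -/
noncomputable def degStirling2 (l : ℝ) (n k : ℕ) : ℝ :=
  (-1)^k / k.factorial * ∑ j ∈ Finset.range (k+1), (-1)^j * (k.choose j : ℝ) * dfall l j n

lemma dfall_zero (l x : ℝ) : dfall l x 0 = 1 := by simp [dfall]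

lemma dfall_succ (l x : ℝ) (n : ℕ) : dfall l x (n+1) = dfall l x n * (x - n * l) := by
  simp [dfall, Finset.prod_range_succ]

lemma dfall_one (l x : ℝ) : dfall l x 1 = x := by simp [dfall]

lemma dfall_add (l x y : ℝ) (n : ℕ) :
    dfall l (x + y) n
      = ∑ j ∈ Finset.range (n+1), (n.choose j : ℝ) * dfall l x j * dfall l y (n - j) := by
  induction n with
  | zero => simp [dfall]
  | succ n ih =>
    have peel : ∑ j ∈ Finset.range (n+2),
        ((n+1).choose j : ℝ) * dfall l x j * dfall l y (n+1 - j)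
        = (∑ j ∈ Finset.range (n+1),
            ((n+1).choose (j+1) : ℝ) * dfall l x (j+1) * dfall l y (n - j))
          + dfall l y (n+1) := by
      rw [Finset.sum_range_succ' (fun j => ((n+1).choose j : ℝ) * dfall l x j * dfall l y (n+1-j)) (n+1)]
      simp [dfall_zero]
    rw [peel]
    have split : ∀ j ∈ Finset.range (n+1),
        ((n+1).choose (j+1) : ℝ) * dfall l x (j+1) * dfall l y (n - j)
        = (n.choose j : ℝ) * dfall l x (j+1) * dfall l y (n - j)
          + (n.choose (j+1) : ℝ) * dfall l x (j+1) * dfall l y (n - j) := by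
      intro j hj
      rw [Nat.choose_succ_succ]
      push_cast
      ring
    rw [Finset.sum_congr rfl split, Finset.sum_add_distrib]
    -- second sum plus boundary term is ∑_{j∈range(n+1)} C(n,j) a_j b_{n+1-j}
    have h2 : (∑ j ∈ Finset.range (n+1),
          (n.choose (j+1) : ℝ) * dfall l x (j+1) * dfall l y (n - j)) + dfall l y (n+1)
        = ∑ j ∈ Finset.range (n+1), (n.choose j : ℝ) * dfall l x j * dfall l y (n + 1 - j) := by
      have : ∑ j ∈ Finset.range (n+2), (n.choose j : ℝ) * dfall l x j * dfall l y (n+1-j)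
          = (∑ j ∈ Finset.range (n+1),
              (n.choose (j+1) : ℝ) * dfall l x (j+1) * dfall l y (n - j)) + dfall l y (n+1) := by
        rw [Finset.sum_range_succ' (fun j => (n.choose j : ℝ) * dfall l x j * dfall l y (n+1-j)) (n+1)]
        simp [dfall_zero]
      rw [← this, Finset.sum_range_succ]
      simp
    rw [add_assoc, h2, ← Finset.sum_add_distrib]
    rw [dfall_succ, ih, Finset.sum_mul]
    apply Finset.sum_congr rfl
    intro j hj
    have hjn : j ≤ n := Nat.lt_succ_iff.mp (Finset.mem_range.mp hj)
    have e1 : dfall l x (j+1) = dfall l x j * (x - j * l) := dfall_succ l x j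
    have e2 : dfall l y (n + 1 - j) = dfall l y (n - j) * (y - (n - j : ℕ) * l) := by
      rw [show n + 1 - j = (n - j) + 1 by omega, dfall_succ]
    rw [e1, e2]
    have : ((n - j : ℕ) : ℝ) = (n : ℝ) - j := by
      push_cast [Nat.cast_sub hjn]; ring
    rw [this]; ring

lemma degExp_mul (l x y : ℝ) : degExp l x * degExp l y = degExp l (x + y) := by
  ext n
  rw [PowerSeries.coeff_mul]
  rw [Finset.Nat.sum_antidiagonal_eq_sum_range_succ_mk]
  simp only [degExp, PowerSeries.coeff_mk]
  rw [dfall_add, Finset.sum_div]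
  apply Finset.sum_congr rfl
  intro j hj
  have hjn : j ≤ n := Nat.lt_succ_iff.mp (Finset.mem_range.mp hj)
  rw [Nat.cast_choose ℝ hjn]
  have h1 : (j.factorial : ℝ) ≠ 0 := Nat.cast_ne_zero.mpr (Nat.factorial_ne_zero j)
  have h2 : ((n-j).factorial : ℝ) ≠ 0 := Nat.cast_ne_zero.mpr (Nat.factorial_ne_zero _)
  have h3 : (n.factorial : ℝ) ≠ 0 := Nat.cast_ne_zero.mpr (Nat.factorial_ne_zero n)
  field_simp

lemma dfall_smul (c l x : ℝ) (n : ℕ) : dfall (c * l) (c * x) n = c ^ n * dfall l x n := by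
  simp only [dfall]
  rw [← Finset.card_range n, ← Finset.prod_const (b := c), Finset.card_range, ← Finset.prod_mul_distrib]
  apply Finset.prod_congr rfl
  intro i _
  ring

lemma rescale_degExp (c l x : ℝ) : rescale c (degExp l x) = degExp (c * l) (c * x) := by
  ext n
  rw [PowerSeries.coeff_rescale]
  simp only [degExp, PowerSeries.coeff_mk, dfall_smul]
  ring

lemma rescale_X_aux (c : ℝ) : rescale c (X : PowerSeries ℝ) = C c * X := by
  ext n
  rw [PowerSeries.coeff_rescale, PowerSeries.coeff_C_mul, PowerSeries.coeff_X]
  split_ifs with h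
  · subst h; simp
  · simp

lemma constantCoeff_degExp (l x : ℝ) : constantCoeff (degExp l x) = 1 := by
  simp [degExp, ← PowerSeries.coeff_zero_eq_constantCoeff, dfall]

lemma coeff_one_degExp (l x : ℝ) : (PowerSeries.coeff 1) (degExp l x) = x := by
  simp [degExp, dfall]

lemma degExp_sub_one_ne (l : ℝ) : degExp l 1 - 1 ≠ 0 := by
  intro h
  have := congrArg (PowerSeries.coeff 1) h
  rw [map_sub, coeff_one_degExp] at this
  simp [PowerSeries.coeff_one] at this

lemma one_add_degExp_ne (l x : ℝ) : (1 : PowerSeries ℝ) + degExp l x ≠ 0 := by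
  intro h
  have := congrArg (constantCoeff) h
  rw [map_add, constantCoeff_degExp] at this
  simp at this

lemma altsum_eq_zero : ∀ (m : ℕ) (p : Polynomial ℝ), p.natDegree < m → ∀ y : ℝ,
    ∑ i ∈ Finset.range (m+1), ((m.choose i : ℝ)) * (-1)^i * p.eval (y - i) = 0 := by
  intro m
  induction m with
  | zero => intro p hp; exact absurd hp (Nat.not_lt_zero _)
  | succ m ih =>
    intro p hp y
    set q : Polynomial ℝ := p - p.comp (Polynomial.X - Polynomial.C 1) with hq
    have evq : ∀ z : ℝ, q.eval z = p.eval z - p.eval (z - 1) := by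
      intro z; simp [hq, Polynomial.eval_comp]
    -- key sum manipulation
    have key : ∑ i ∈ Finset.range (m+2), (((m+1).choose i : ℝ)) * (-1)^i * p.eval (y - i)
        = ∑ i ∈ Finset.range (m+1), ((m.choose i : ℝ)) * (-1)^i * q.eval (y - i) := by
      have peel : ∑ i ∈ Finset.range (m+2), (((m+1).choose i : ℝ)) * (-1)^i * p.eval (y - i)
          = (∑ i ∈ Finset.range (m+1),
              (((m+1).choose (i+1) : ℝ)) * (-1)^(i+1) * p.eval (y - (i+1)))
            + p.eval y := by
        rw [Finset.sum_range_succ'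
          (fun i => (((m+1).choose i : ℝ)) * (-1)^i * p.eval (y - i)) (m+1)]
        simp
      rw [peel]
      have split : ∀ i ∈ Finset.range (m+1),
          (((m+1).choose (i+1) : ℝ)) * (-1)^(i+1) * p.eval (y - (i+1))
          = -((m.choose i : ℝ) * (-1)^i * p.eval (y - i - 1))
            - (m.choose (i+1) : ℝ) * (-1)^i * p.eval (y - i - 1) := by
        intro i hi
        rw [Nat.choose_succ_succ]
        push_cast
        have harg : y - ((i:ℝ)+1) = y - i - 1 := by ring
        rw [harg]
        ring
      rw [Finset.sum_congr rfl split, Finset.sum_sub_distrib]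
      have h2 : (∑ i ∈ Finset.range (m+1),
            (m.choose (i+1) : ℝ) * (-1)^i * p.eval (y - i - 1)) - p.eval y
          = - ∑ i ∈ Finset.range (m+1), (m.choose i : ℝ) * (-1)^i * p.eval (y - i) := by
        have expand : ∑ i ∈ Finset.range (m+2), (m.choose i : ℝ) * (-1)^(i+1) * p.eval (y - i)
            = (∑ i ∈ Finset.range (m+1),
                (m.choose (i+1) : ℝ) * (-1)^(i+2) * p.eval (y - (i+1))) + (-1) * p.eval y := by
          rw [Finset.sum_range_succ'
            (fun i => (m.choose i : ℝ) * (-1)^(i+1) * p.eval (y - i)) (m+1)]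
          simp
        have e2 : ∀ i ∈ Finset.range (m+1),
            (m.choose (i+1) : ℝ) * (-1)^(i+2) * p.eval (y - (i+1))
            = (m.choose (i+1) : ℝ) * (-1)^i * p.eval (y - i - 1) := by
          intro i _
          have harg : y - ((i:ℝ)+1) = y - i - 1 := by ring
          rw [harg]; ring
        rw [Finset.sum_congr rfl e2] at expand
        have e3 : ∑ i ∈ Finset.range (m+2), (m.choose i : ℝ) * (-1)^(i+1) * p.eval (y - i)
            = ∑ i ∈ Finset.range (m+1), (m.choose i : ℝ) * (-1)^(i+1) * p.eval (y - i) := by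
          rw [Finset.sum_range_succ]
          simp [Nat.choose_eq_zero_of_lt (Nat.lt_succ_self m)]
        rw [e3] at expand
        have e4 : ∑ i ∈ Finset.range (m+1), (m.choose i : ℝ) * (-1)^(i+1) * p.eval (y - i)
            = - ∑ i ∈ Finset.range (m+1), (m.choose i : ℝ) * (-1)^i * p.eval (y - i) := by
          rw [← Finset.sum_neg_distrib]
          apply Finset.sum_congr rfl
          intro i _; ring
        rw [e4] at expand
        linarith [expand]
      -- combine
      have : ∀ i ∈ Finset.range (m+1),
          ((m.choose i : ℝ)) * (-1)^i * q.eval (y - i)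
          = (m.choose i : ℝ) * (-1)^i * p.eval (y - i)
            - (m.choose i : ℝ) * (-1)^i * p.eval (y - i - 1) := by
        intro i _; rw [evq]; ring
      rw [Finset.sum_congr rfl this, Finset.sum_sub_distrib, Finset.sum_neg_distrib]
      linarith [h2]
    rw [key]
    by_cases hq0 : q = 0
    · simp [hq0]
    · apply ih
      have hpd : p.natDegree ≠ 0 := by
        intro h0
        obtain ⟨a, ha⟩ := Polynomial.natDegree_eq_zero.mp h0
        apply hq0
        simp [hq, ← ha]
      have hp0 : p ≠ 0 := by intro h; apply hpd; simp [h]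
      have hXC : (Polynomial.X - 1 : Polynomial ℝ) = Polynomial.X - Polynomial.C 1 := by
        simp
      have hcomp_deg : (p.comp (Polynomial.X - Polynomial.C 1)).natDegree = p.natDegree := by
        rw [Polynomial.natDegree_comp, Polynomial.natDegree_X_sub_C]
        ring
      have hcomp_ne : p.comp (Polynomial.X - Polynomial.C 1) ≠ 0 := by
        intro h
        have := hcomp_deg
        rw [h] at this
        simp at this
        exact hpd this.symm
      have hlc : p.leadingCoeff = (p.comp (Polynomial.X - Polynomial.C 1)).leadingCoeff := by
        rw [Polynomial.leadingCoeff_comp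
          (by rw [Polynomial.natDegree_X_sub_C]; exact one_ne_zero)]
        rw [(Polynomial.monic_X_sub_C (1:ℝ)).leadingCoeff]
        ring
      have hdeg : p.degree = (p.comp (Polynomial.X - Polynomial.C 1)).degree := by
        rw [Polynomial.degree_eq_natDegree hp0, Polynomial.degree_eq_natDegree hcomp_ne, hcomp_deg]
      have : q.degree < p.degree := Polynomial.degree_sub_lt hdeg hp0 hlc
      have hqlt : q.natDegree < p.natDegree := Polynomial.natDegree_lt_natDegree hq0 this
      omega

lemma num_eq_zero (l : ℝ) (n k : ℕ) (hk : n < k) : degEulerianNum l n k = 0 := by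
  set p : Polynomial ℝ := ∏ r ∈ Finset.range n, (Polynomial.X + Polynomial.C (1 - r * l)) with hp
  have hdeg : p.natDegree = n := by
    rw [hp, Polynomial.natDegree_prod]
    · have h1 : ∀ r ∈ Finset.range n, (Polynomial.X + Polynomial.C (1 - (r:ℝ) * l)).natDegree = 1 :=
        fun r _ => Polynomial.natDegree_X_add_C _
      rw [Finset.sum_congr rfl h1]
      simp
    · intro r _; exact Polynomial.X_add_C_ne_zero _
  have hev : ∀ z : ℝ, p.eval z = dfall l (z + 1) n := by
    intro z
    rw [hp, Polynomial.eval_prod]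
    apply Finset.prod_congr rfl
    intro r _
    simp; ring
  have hz := altsum_eq_zero (n+1) p (by omega) (k : ℝ)
  rw [degEulerianNum]
  have hsub : Finset.range (n+2) ⊆ Finset.range (k+1) := by
    intro i hi; simp at hi ⊢; omega
  rw [← Finset.sum_subset hsub (by
    intro i hi hni
    simp only [Finset.mem_range] at hi hni
    have : n + 1 < i := by omega
    rw [Nat.choose_eq_zero_of_lt this]
    simp)]
  rw [← hz]
  apply Finset.sum_congr rfl
  intro i _
  rw [hev]

-- coefficient of (1 - X)^m
lemma coeff_one_sub_X_pow (m k : ℕ) :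
    (PowerSeries.coeff k) (((1 : PowerSeries ℝ) - X)^m) = (-1)^k * (m.choose k : ℝ) := by
  have hexp : ((1 : PowerSeries ℝ) - X)^m
      = ∑ i ∈ Finset.range (m+1), PowerSeries.C ((-1)^i * (m.choose i : ℝ)) * X^i := by
    have : ((1 : PowerSeries ℝ) - X) = (-X) + 1 := by ring
    rw [this, add_pow]
    apply Finset.sum_congr rfl
    intro i _
    rw [neg_pow]
    simp only [one_pow, mul_one, map_mul, map_pow, map_neg, map_one, map_natCast]
    push_cast
    ring
  rw [hexp, map_sum]
  simp only [PowerSeries.coeff_C_mul, PowerSeries.coeff_X_pow]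
  rw [Finset.sum_eq_single k]
  · by_cases hk : k ≤ m
    · simp
    · simp only [if_pos rfl, mul_one]
      rw [Nat.choose_eq_zero_of_lt (by omega)]
      simp
  · intro i _ hik
    simp [Ne.symm hik]
  · intro hk
    simp only [Finset.mem_range, not_lt] at hk
    rw [Nat.choose_eq_zero_of_lt (by omega)]
    simp

noncomputable def Apow (l : ℝ) (n : ℕ) : PowerSeries ℝ := PowerSeries.mk (degEulerianNum l n)
noncomputable def Sig (l : ℝ) (n : ℕ) : PowerSeries ℝ :=
  PowerSeries.mk (fun j => dfall l ((j : ℝ) + 1) n)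

lemma Apow_eq (l : ℝ) (n : ℕ) : Apow l n = ((1 : PowerSeries ℝ) - X)^(n+1) * Sig l n := by
  ext k
  rw [PowerSeries.coeff_mul, Finset.Nat.sum_antidiagonal_eq_sum_range_succ_mk]
  simp only [coeff_one_sub_X_pow, Apow, Sig, PowerSeries.coeff_mk]
  rw [degEulerianNum]
  apply Finset.sum_congr rfl
  intro i hi
  have hik : i ≤ k := Nat.lt_succ_iff.mp (Finset.mem_range.mp hi)
  rw [Nat.cast_sub hik]
  ring

lemma Sig_rec (l : ℝ) (n : ℕ) :
    Sig l n = PowerSeries.C (dfall l 1 n)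
      + X * ∑ j ∈ Finset.range (n+1),
          PowerSeries.C ((n.choose j : ℝ) * dfall l 1 (n - j)) * Sig l j := by
  ext k
  rw [map_add]
  cases k with
  | zero =>
    simp only [Sig, PowerSeries.coeff_mk, PowerSeries.coeff_zero_eq_constantCoeff, map_mul]
    simp [Sig]
  | succ k =>
    rw [PowerSeries.coeff_succ_X_mul]
    have hC : (PowerSeries.coeff (k+1)) (PowerSeries.C (dfall l 1 n)) = 0 := by
      simp
    rw [hC, zero_add, map_sum]
    simp only [PowerSeries.coeff_C_mul, Sig, PowerSeries.coeff_mk]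
    -- Vandermonde with x = k+1, y = 1
    have hv := dfall_add l ((k : ℝ) + 1) 1 n
    have harg : ((k : ℝ) + 1) + 1 = ((k : ℕ) + 1 : ℕ) + 1 := by push_cast; ring
    rw [show ((k+1 : ℕ) : ℝ) + 1 = ((k : ℝ) + 1) + 1 by push_cast; ring]
    rw [hv]
    apply Finset.sum_congr rfl
    intro j _
    ring

lemma eulerStarPow (l : ℝ) (n : ℕ) :
    Apow l n = PowerSeries.C (dfall l 1 n) * ((1 : PowerSeries ℝ) - X)^(n+1)
      + X * ∑ j ∈ Finset.range (n+1),
          PowerSeries.C ((n.choose j : ℝ) * dfall l 1 (n - j))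
            * ((1 : PowerSeries ℝ) - X)^(n - j) * Apow l j := by
  rw [Apow_eq, Sig_rec, mul_add]
  congr 1
  · ring
  · rw [mul_left_comm, Finset.mul_sum]
    congr 1
    apply Finset.sum_congr rfl
    intro j hj
    have hjn : j ≤ n := Nat.lt_succ_iff.mp (Finset.mem_range.mp hj)
    have hsplit : ((1 : PowerSeries ℝ) - X)^(n+1)
        = ((1 : PowerSeries ℝ) - X)^(n - j) * ((1 : PowerSeries ℝ) - X)^(j+1) := by
      rw [← pow_add]
      congr 1
      omega
    rw [Apow_eq l j, hsplit]
    ring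

noncomputable def APoly (l : ℝ) (n : ℕ) : Polynomial ℝ :=
  ∑ k ∈ Finset.range (n+1), Polynomial.C (degEulerianNum l n k) * Polynomial.X^k

lemma coe_APoly (l : ℝ) (n : ℕ) : ((APoly l n : Polynomial ℝ) : PowerSeries ℝ) = Apow l n := by
  ext k
  rw [Polynomial.coeff_coe]
  simp only [APoly, Polynomial.finset_sum_coeff, Polynomial.coeff_C_mul, Polynomial.coeff_X_pow,
    Apow, PowerSeries.coeff_mk]
  rw [Finset.sum_eq_single k]
  · by_cases hk : k ≤ n
    · simp
    · simp
  · intro i _ hik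
    simp [Ne.symm hik]
  · intro hk
    simp only [Finset.mem_range, not_lt] at hk
    rw [num_eq_zero l n k (by omega)]
    simp

lemma coe_sum (s : Finset ℕ) (f : ℕ → Polynomial ℝ) :
    ((∑ j ∈ s, f j : Polynomial ℝ) : PowerSeries ℝ) = ∑ j ∈ s, ((f j : Polynomial ℝ) : PowerSeries ℝ) := by
  classical
  induction s using Finset.induction_on with
  | empty => simp
  | insert _ _ h ih => rw [Finset.sum_insert h, Finset.sum_insert h, Polynomial.coe_add, ih]

lemma APoly_star (l : ℝ) (n : ℕ) :
    APoly l n = Polynomial.C (dfall l 1 n) * ((1 : Polynomial ℝ) - Polynomial.X)^(n+1)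
      + Polynomial.X * ∑ j ∈ Finset.range (n+1),
          Polynomial.C ((n.choose j : ℝ) * dfall l 1 (n - j))
            * ((1 : Polynomial ℝ) - Polynomial.X)^(n - j) * APoly l j := by
  rw [← Polynomial.coe_inj]
  simp only [Polynomial.coe_add, Polynomial.coe_mul, Polynomial.coe_pow, Polynomial.coe_sub,
    Polynomial.coe_one, Polynomial.coe_X, Polynomial.coe_C, coe_sum, coe_APoly]
  exact eulerStarPow l n

lemma diamond (l : ℝ) (n : ℕ) :
    degEulerianPoly l n (-1) = dfall l 1 n * 2^(n+1)
      - ∑ j ∈ Finset.range (n+1),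
          (n.choose j : ℝ) * dfall l 1 (n - j) * 2^(n - j) * degEulerianPoly l j (-1) := by
  have hev : ∀ m : ℕ, (APoly l m).eval (-1) = degEulerianPoly l m (-1) := by
    intro m
    simp [APoly, degEulerianPoly, Polynomial.eval_finset_sum]
  have := congrArg (Polynomial.eval (-1)) (APoly_star l n)
  rw [hev] at this
  simp only [Polynomial.eval_add, Polynomial.eval_mul, Polynomial.eval_C, Polynomial.eval_pow,
    Polynomial.eval_sub, Polynomial.eval_one, Polynomial.eval_X, Polynomial.eval_finset_sum] at this
  rw [this]
  have h2 : (1 : ℝ) - (-1) = 2 := by norm_num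
  rw [h2]
  rw [Finset.mul_sum, Finset.sum_congr rfl (fun j hj => by rw [hev j])]
  rw [sub_eq_add_neg, ← Finset.sum_neg_distrib]
  congr 1
  apply Finset.sum_congr rfl
  intro j _
  ring

lemma dfall_two (l : ℝ) (m : ℕ) : dfall (2*l) 2 m = 2^m * dfall l 1 m := by
  have := dfall_smul 2 l 1 m
  simpa using this

lemma claim1 (l : ℝ) :
    ((1 : PowerSeries ℝ) + degExp (2*l) 2) * PowerSeries.mk (fun n => degEulerianPoly l n (-1) / n.factorial)
      = C 2 * degExp (2*l) 2 := by
  ext n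
  rw [add_mul, one_mul, map_add, PowerSeries.coeff_C_mul]
  rw [PowerSeries.coeff_mul, Finset.Nat.sum_antidiagonal_eq_sum_range_succ_mk]
  simp only [degExp, PowerSeries.coeff_mk, dfall_two]
  have hn : ((n.factorial : ℝ)) ≠ 0 := Nat.cast_ne_zero.mpr (Nat.factorial_ne_zero n)
  have hsum : ∑ i ∈ Finset.range (n+1),
      (2^i * dfall l 1 i / i.factorial) * (degEulerianPoly l (n-i) (-1) / (n-i).factorial)
      = ∑ j ∈ Finset.range (n+1),
          (n.choose j : ℝ) * dfall l 1 (n - j) * 2^(n - j) * degEulerianPoly l j (-1) / n.factorial := by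
    rw [← Finset.sum_range_reflect]
    apply Finset.sum_congr rfl
    intro j hj
    have hjn : j ≤ n := Nat.lt_succ_iff.mp (Finset.mem_range.mp hj)
    have e1 : n + 1 - 1 - j = n - j := by omega
    have e2 : n - (n - j) = j := by omega
    rw [e1, e2]
    rw [Nat.cast_choose ℝ hjn]
    have h1 : ((j.factorial : ℝ)) ≠ 0 := Nat.cast_ne_zero.mpr (Nat.factorial_ne_zero _)
    have h2 : (((n-j).factorial : ℝ)) ≠ 0 := Nat.cast_ne_zero.mpr (Nat.factorial_ne_zero _)
    field_simp
  rw [hsum, ← Finset.sum_div]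
  have hd := diamond l n
  have : ∑ j ∈ Finset.range (n+1),
      (n.choose j : ℝ) * dfall l 1 (n - j) * 2^(n - j) * degEulerianPoly l j (-1)
      = dfall l 1 n * 2^(n+1) - degEulerianPoly l n (-1) := by linarith
  rw [this]
  field_simp
  ring

/-- with `b μ n` the degenerate Bernoulli numbers `β_{n,μ}` (defined by
`t = (e_μ(t)-1)·∑_n β_{n,μ} t^n/n!`), one has `A_{0,λ}(-1) = 1` and, for `n ≥ 1`,
`A_{n,λ}(-1) = 2^{n+1}(2^{n+1} β_{n+1,λ/2} - β_{n+1,λ})/(n+1)`. -/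
theorem stmt5 (l : ℝ) (b : ℝ → ℕ → ℝ)
    (hb : ∀ μ : ℝ, (PowerSeries.X : PowerSeries ℝ) =
      (degExp μ 1 - 1) * PowerSeries.mk (fun n => b μ n / n.factorial)) :
    degEulerianPoly l 0 (-1) = 1 ∧
    ∀ n : ℕ, 1 ≤ n →
      degEulerianPoly l n (-1) =
        2 ^ (n + 1) * (2 ^ (n + 1) * b (l / 2) (n + 1) - b l (n + 1)) / (n + 1) := by
  constructor
  · simp [degEulerianPoly, degEulerianNum, dfall]
  intro n hn
  set E : PowerSeries ℝ := degExp l 1 with hE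
  set B1 : PowerSeries ℝ := PowerSeries.mk (fun n => b l n / n.factorial) with hB1
  set B2 : PowerSeries ℝ := PowerSeries.mk (fun n => b (l/2) n / n.factorial) with hB2
  have h1 : (X : PowerSeries ℝ) = (E - 1) * B1 := hb l
  have h2 : (X : PowerSeries ℝ) = (degExp (l/2) 1 - 1) * B2 := hb (l/2)
  -- rescale h2 by 2
  have h2' : C 2 * X = (degExp l 2 - 1) * rescale 2 B2 := by
    have h := congrArg (rescale (2:ℝ)) h2
    rw [map_mul, map_sub, map_one, rescale_degExp, rescale_X_aux] at h
    rw [show (2:ℝ) * (l/2) = l by ring, show (2:ℝ) * 1 = 2 by norm_num] at h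
    exact h
  have hEE : degExp l 2 = E * E := by
    rw [hE, degExp_mul]; norm_num
  -- key cancellation
  have key : (E + 1) * (rescale 2 B2 - B1) = - X := by
    have hc : (E - 1) * ((E + 1) * (rescale 2 B2 - B1)) = (E - 1) * (- X) := by
      have expand : (E - 1) * ((E + 1) * (rescale 2 B2 - B1))
          = (E * E - 1) * rescale 2 B2 - (E + 1) * ((E - 1) * B1) := by ring
      have hC2 : (C 2) * (X : PowerSeries ℝ) = X + X := by
        rw [show (2:ℝ) = 1+1 by norm_num, map_add, map_one]
        ring
      rw [expand, ← hEE, ← h2', ← h1]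
      linear_combination hC2
    exact mul_left_cancel₀ (degExp_sub_one_ne l) hc
  -- rescale key by 2
  have key2 : (degExp (2*l) 2 + 1) * rescale 2 (rescale 2 B2 - B1) = - (C 2 * X) := by
    have h := congrArg (rescale (2:ℝ)) key
    rw [map_mul, map_add, map_one, map_neg, map_sub, rescale_X_aux] at h
    rw [hE, rescale_degExp] at h
    rw [show (2:ℝ) * 1 = 2 by norm_num] at h
    rw [map_sub]
    exact h
  set P : PowerSeries ℝ := PowerSeries.mk (fun n => degEulerianPoly l n (-1) / n.factorial) with hP
  set D : PowerSeries ℝ := rescale 2 (rescale 2 B2 - B1) with hD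
  -- claim3 : X * P = D + C 2 * X
  have claim3 : X * P = D + C 2 * X := by
    have hne : (1 : PowerSeries ℝ) + degExp (2*l) 2 ≠ 0 := one_add_degExp_ne (2*l) 2
    apply mul_left_cancel₀ hne
    have c1 := claim1 l
    calc ((1 : PowerSeries ℝ) + degExp (2*l) 2) * (X * P)
        = X * (((1 : PowerSeries ℝ) + degExp (2*l) 2) * P) := by ring
      _ = X * (C 2 * degExp (2*l) 2) := by rw [c1]
      _ = ((1 : PowerSeries ℝ) + degExp (2*l) 2) * (D + C 2 * X) := by
          linear_combination -key2
  -- extract coefficient n+1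
  have hco := congrArg (PowerSeries.coeff (n+1)) claim3
  rw [PowerSeries.coeff_succ_X_mul, map_add, PowerSeries.coeff_C_mul, PowerSeries.coeff_X] at hco
  have hXz : (if n + 1 = 1 then (1:ℝ) else 0) = 0 := by
    rw [if_neg]; omega
  rw [hXz, mul_zero, add_zero] at hco
  rw [hD, PowerSeries.coeff_rescale, map_sub, PowerSeries.coeff_rescale] at hco
  simp only [hP, hB1, hB2, PowerSeries.coeff_mk] at hco
  -- hco : degEulerianPoly l n (-1) / n! = 2^(n+1) * (2^(n+1) * (b (l/2) (n+1) / (n+1)!) - b l (n+1) / (n+1)!)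
  have hfac : ((n+1).factorial : ℝ) = (n+1) * n.factorial := by
    rw [Nat.factorial_succ]; push_cast; ring
  have hn1 : ((n:ℝ) + 1) ≠ 0 := by positivity
  have hnf : ((n.factorial : ℝ)) ≠ 0 := Nat.cast_ne_zero.mpr (Nat.factorial_ne_zero n)
  field_simp [hfac] at hco ⊢
  have h' : degEulerianPoly l n (-1) * ((n:ℝ) + 1)
      = 2 ^ (n + 1) * (2 ^ (n + 1) * b (l / 2) (n + 1) - b l (n + 1)) := by
    apply mul_right_cancel₀ hnf
    linear_combination hco - degEulerianPoly l n (-1) * hfac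
  linear_combination h'
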